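/- Let N ≥ 2 be an integer, p ∈ ℤ, θ₀ ∈ ℝ, K > 0, ω ∈ ℝ, and let θ*_i = θ₀ + 2πp·i/N be the splay configuration. Suppose agent i is perturbed to θ*_i + δ while its two ring neighbors remain at their equilibrium values θ*_{i−1} and θ*_{i+1}. Then the instantaneous velocity of agent i under the time-inverted Kuramoto dynamics equals ω − K[ sin(θ*_{i+1} − θ*_i − δ) + sin(θ*_{i−1} − θ*_i − δ) ] = ω + 2K cos(2πp/N) sin δ. Consequently, if cos(2πp/N) < 0 and sin δ ≠ 0, then the deviation of the velocity from ω has sign opposite to sin δ, i.e., the feedback instantaneously pushes the perturbed agent back toward the equilibrium (resiliency to type I failures, Theorem 2). -/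

import Mathlib

open Real

/-- Resiliency to type I failures: if agent `i` of the splay configuration
`θ*_j = θ₀ + 2πp·j/N` is perturbed by `δ` while its ring neighbours stay at
equilibrium, its instantaneous velocity under the time-inverted Kuramoto
dynamics equals `ω + 2K cos(2πp/N) sin δ`; hence if `cos(2πp/N) < 0` and
`sin δ ≠ 0`, the deviation of the velocity from `ω` has sign opposite to
`sin δ`, pushing the perturbed agent back toward equilibrium. -/
theorem perturbed_agent_velocity_restoring
    (N : ℕ) (hN : 2 ≤ N) (p : ℤ) (θ₀ ω K δ : ℝ) (hK : 0 < K)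
    (θs : ℤ → ℝ) (hθs : ∀ j : ℤ, θs j = θ₀ + 2 * π * p * j / N) :
    ∀ i : ℤ,
      ω - K * (Real.sin (θs (i + 1) - (θs i + δ)) +
               Real.sin (θs (i - 1) - (θs i + δ))) =
        ω + 2 * K * Real.cos (2 * π * p / N) * Real.sin δ ∧
      (Real.cos (2 * π * p / N) < 0 → Real.sin δ ≠ 0 →
        (2 * K * Real.cos (2 * π * p / N) * Real.sin δ) * Real.sin δ < 0) := by
  intro i
  have hN0 : (N : ℝ) ≠ 0 := by positivity
  set a : ℝ := 2 * π * p / N with ha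
  have h1 : θs (i + 1) - (θs i + δ) = a - δ := by
    rw [hθs, hθs]; push_cast; rw [ha]; ring
  have h2 : θs (i - 1) - (θs i + δ) = -a - δ := by
    rw [hθs, hθs]; push_cast; rw [ha]; ring
  constructor
  · rw [h1, h2, Real.sin_sub, Real.sin_sub, Real.sin_neg, Real.cos_neg]
    ring
  · intro hc hs
    have h3 : 0 < Real.sin δ * Real.sin δ := by
      rcases lt_or_gt_of_ne hs with h | h
      · exact mul_pos_of_neg_of_neg h h
      · exact mul_pos h h
    nlinarith [mul_pos hK h3, mul_neg_of_neg_of_pos hc (mul_pos hK h3)]
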